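/- arXiv:0901.4036 — 2 statements merged into one kernel-verified Lean document; each statement's English description precedes it below -/
import Mathlib

section
/- Null space characterization of the transposed Abaffian: if in addition a₁, …, a_i are linearly independent, then for each 1 ≤ i ≤ m the null space of H_{i+1}ᵀ, i.e. {x ∈ ℝⁿ : H_{i+1}ᵀ x = 0}, equals the linear span of the Abaffy parameter vectors w₁, …, w_i. -/
open Matrix

/-- `(vecMulVec u v) *ᵥ x = (v ⬝ᵥ x) • u`. -/
lemma vecMulVec_mulVec' {n : ℕ} (u v x : Fin n → ℝ) :
    (vecMulVec u v).mulVec x = (v ⬝ᵥ x) • u := by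
  funext i
  simp [mulVec, dotProduct, vecMulVec_apply, Finset.mul_sum, Finset.sum_mul,
    mul_assoc, mul_comm, mul_left_comm]

theorem abs_null_space_abaffian_transpose
    (m n : ℕ) (hm : 0 < m) (hmn : m ≤ n)
    (a z w p : ℕ → (Fin n → ℝ))
    (H : ℕ → Matrix (Fin n) (Fin n) ℝ)
    (hH1 : IsUnit (H 1))
    (hz : ∀ i, 1 ≤ i → i ≤ m → z i ⬝ᵥ (H i).mulVec (a i) ≠ 0)
    (hw : ∀ i, 1 ≤ i → i ≤ m → w i ⬝ᵥ (H i).mulVec (a i) ≠ 0)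
    (hrec : ∀ i, 1 ≤ i → i ≤ m →
      H (i + 1) = H i - (w i ⬝ᵥ (H i).mulVec (a i))⁻¹ •
        Matrix.vecMulVec ((H i).mulVec (a i)) (Matrix.vecMul (w i) (H i)))
    (hp : ∀ i, 1 ≤ i → i ≤ m → p i = Matrix.mulVec (H i)ᵀ (z i)) :
    ∀ i, 1 ≤ i → i ≤ m →
      LinearIndependent ℝ (fun j : Fin i => a (j.1 + 1)) →
      {x : Fin n → ℝ | (H (i + 1))ᵀ.mulVec x = 0} =
        ↑(Submodule.span ℝ (Set.range fun j : Fin i => w (j.1 + 1))) := by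
  -- Key transpose formula at step k.
  have step : ∀ k, 1 ≤ k → k ≤ m → ∀ x : Fin n → ℝ,
      (H (k + 1))ᵀ.mulVec x =
        (H k)ᵀ.mulVec (x - ((w k ⬝ᵥ (H k).mulVec (a k))⁻¹ *
          ((H k).mulVec (a k) ⬝ᵥ x)) • w k) := by
    intro k hk1 hkm x
    rw [hrec k hk1 hkm]
    have hv : Matrix.vecMul (w k) (H k) = (H k)ᵀ.mulVec (w k) :=
      (mulVec_transpose (H k) (w k)).symm
    rw [hv]
    rw [transpose_sub, transpose_smul, sub_mulVec, smul_mulVec]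
    have ht : (vecMulVec ((H k).mulVec (a k)) ((H k)ᵀ.mulVec (w k)))ᵀ
        = vecMulVec ((H k)ᵀ.mulVec (w k)) ((H k).mulVec (a k)) := by
      ext i j; simp [vecMulVec_apply, transpose_apply, mul_comm]
    rw [ht, vecMulVec_mulVec', mulVec_sub]
    have : (H k)ᵀ.mulVec ((((w k ⬝ᵥ (H k).mulVec (a k))⁻¹ *
          ((H k).mulVec (a k) ⬝ᵥ x)) • w k))
        = ((w k ⬝ᵥ (H k).mulVec (a k))⁻¹ * ((H k).mulVec (a k) ⬝ᵥ x)) •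
          (H k)ᵀ.mulVec (w k) := by
      rw [mulVec_smul]
    rw [this, smul_smul, mul_comm]
  -- Main induction (linear independence not needed).
  have key : ∀ i, i ≤ m →
      {x : Fin n → ℝ | (H (i + 1))ᵀ.mulVec x = 0} =
        ↑(Submodule.span ℝ (Set.range fun j : Fin i => w (j.1 + 1))) := by
    intro i
    induction i with
    | zero =>
      intro _
      ext x
      simp only [Set.mem_setOf_eq]
      constructor
      · intro hx
        have hinj : Function.Injective (H 1)ᵀ.mulVec :=
          mulVec_injective_iff_isUnit.mpr ((isUnit_transpose _).mpr hH1)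
        have : x = 0 := by
          apply hinj
          simpa using hx
        simp [this]
      · intro hx
        have hx0 : x = 0 := by
          have : x ∈ Submodule.span ℝ (Set.range fun j : Fin 0 => w (j.1 + 1)) := hx
          simpa [Set.range_eq_empty, Submodule.span_empty] using this
        simp [hx0]
    | succ i IH =>
      intro hle
      have hile : i ≤ m := Nat.le_of_succ_le hle
      have IH' := IH hile
      have hk1 : 1 ≤ i + 1 := Nat.succ_le_succ (Nat.zero_le _)
      -- split the range
      have hrange : (Set.range fun j : Fin (i+1) => w (j.1 + 1)) =
          (Set.range fun j : Fin i => w (j.1 + 1)) ∪ {w (i + 1)} := by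
        ext v
        constructor
        · rintro ⟨j, rfl⟩
          rcases lt_or_eq_of_le (Nat.lt_succ_iff.mp j.2) with hj | hj
          · exact Or.inl ⟨⟨j.1, hj⟩, rfl⟩
          · right; simp [hj]
        · rintro (⟨j, rfl⟩ | hv)
          · exact ⟨⟨j.1, Nat.lt_succ_of_lt j.2⟩, rfl⟩
          · exact ⟨⟨i, Nat.lt_succ_self i⟩, by simp at hv; simp [hv]⟩
      have hspan : Submodule.span ℝ (Set.range fun j : Fin (i+1) => w (j.1 + 1)) =
          Submodule.span ℝ (Set.range fun j : Fin i => w (j.1 + 1)) ⊔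
            Submodule.span ℝ {w (i + 1)} := by
        rw [hrange, Submodule.span_union]
      -- membership in prev span kills H_{i+1}ᵀ
      have hkill : ∀ y : Fin n → ℝ,
          y ∈ Submodule.span ℝ (Set.range fun j : Fin i => w (j.1 + 1)) →
          (H (i + 1))ᵀ.mulVec y = 0 := by
        intro y hy
        have : y ∈ {x : Fin n → ℝ | (H (i + 1))ᵀ.mulVec x = 0} := by
          rw [IH']; exact hy
        exact this
      -- H_{i+2}ᵀ w_{i+1} = 0
      have hwkill : (H (i + 1 + 1))ᵀ.mulVec (w (i + 1)) = 0 := by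
        rw [step (i+1) hk1 hle]
        have hc : (H (i+1)).mulVec (a (i+1)) ⬝ᵥ w (i+1)
            = w (i+1) ⬝ᵥ (H (i+1)).mulVec (a (i+1)) := dotProduct_comm _ _
        rw [hc, inv_mul_cancel₀ (hw (i+1) hk1 hle), one_smul, sub_self, mulVec_zero]
      ext x
      simp only [Set.mem_setOf_eq, SetLike.mem_coe]
      rw [hspan]
      constructor
      · intro hx
        rw [step (i+1) hk1 hle] at hx
        set t := (w (i+1) ⬝ᵥ (H (i+1)).mulVec (a (i+1)))⁻¹ *
          ((H (i+1)).mulVec (a (i+1)) ⬝ᵥ x) with ht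
        have hmem : x - t • w (i+1) ∈
            Submodule.span ℝ (Set.range fun j : Fin i => w (j.1 + 1)) := by
          have : x - t • w (i+1) ∈ {y : Fin n → ℝ | (H (i + 1))ᵀ.mulVec y = 0} := hx
          rwa [IH'] at this
        have : x = (x - t • w (i+1)) + t • w (i+1) := by abel
        rw [this]
        exact Submodule.add_mem_sup hmem
          (Submodule.smul_mem _ t (Submodule.subset_span rfl))
      · intro hx
        rcases Submodule.mem_sup.mp hx with ⟨y, hy, u, hu, rfl⟩
        rcases Submodule.mem_span_singleton.mp hu with ⟨t, rfl⟩
        rw [mulVec_add, mulVec_smul, hwkill, smul_zero, add_zero]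
        rw [step (i+1) hk1 hle]
        have hdy : (H (i+1)).mulVec (a (i+1)) ⬝ᵥ y = 0 := by
          have h0 : (H (i+1))ᵀ.mulVec y = 0 := hkill y hy
          calc (H (i+1)).mulVec (a (i+1)) ⬝ᵥ y
              = y ⬝ᵥ (H (i+1)).mulVec (a (i+1)) := dotProduct_comm _ _
            _ = ((H (i+1))ᵀ.mulVec y) ⬝ᵥ (a (i+1)) := by
                rw [dotProduct_mulVec, ← mulVec_transpose]
            _ = 0 := by rw [h0, zero_dotProduct]
        rw [hdy, mul_zero, zero_smul, sub_zero]
        exact hkill y hy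
  intro i hi1 him _
  exact key i him
end

section
/- Finite termination of the basic ABS algorithm (deterministic case): let b ∈ ℝ^m, let x₁ ∈ ℝⁿ be arbitrary, and define x_{i+1} = x_i − α_i p_i with step size α_i = (a_iᵀ x_i − b_i)/(a_iᵀ p_i) for i = 1, …, m. Then for every 1 ≤ i ≤ m and every 1 ≤ l ≤ i one has a_lᵀ x_{i+1} = b_l; in particular x_{m+1} satisfies A x_{m+1} = b. -/
open Matrix

lemma my_vecMulVec_mulVec {n : ℕ} (u v x : Fin n → ℝ) :
    (Matrix.vecMulVec u v).mulVec x = (v ⬝ᵥ x) • u := by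
  funext k
  simp only [Matrix.mulVec, Matrix.vecMulVec_apply, dotProduct, Pi.smul_apply,
    smul_eq_mul, Matrix.of_apply]
  rw [Finset.sum_mul]
  exact Finset.sum_congr rfl fun j _ => by ring

theorem abs_finite_termination
    (m n : ℕ) (hm : 0 < m) (hmn : m ≤ n)
    (a z w p : ℕ → (Fin n → ℝ))
    (H : ℕ → Matrix (Fin n) (Fin n) ℝ)
    (hH1 : IsUnit (H 1))
    (hz : ∀ i, 1 ≤ i → i ≤ m → z i ⬝ᵥ (H i).mulVec (a i) ≠ 0)
    (hw : ∀ i, 1 ≤ i → i ≤ m → w i ⬝ᵥ (H i).mulVec (a i) ≠ 0)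
    (hrec : ∀ i, 1 ≤ i → i ≤ m →
      H (i + 1) = H i - (w i ⬝ᵥ (H i).mulVec (a i))⁻¹ •
        Matrix.vecMulVec ((H i).mulVec (a i)) (Matrix.vecMul (w i) (H i)))
    (hp : ∀ i, 1 ≤ i → i ≤ m → p i = Matrix.mulVec (H i)ᵀ (z i))
    (b : ℕ → ℝ) (x : ℕ → (Fin n → ℝ))
    (hx : ∀ i, 1 ≤ i → i ≤ m →
      x (i + 1) = x i - ((a i ⬝ᵥ x i - b i) / (a i ⬝ᵥ p i)) • p i) :
    (∀ i l, 1 ≤ l → l ≤ i → i ≤ m → a l ⬝ᵥ x (i + 1) = b l) ∧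
    (∀ l, 1 ≤ l → l ≤ m → a l ⬝ᵥ x (m + 1) = b l) := by
  -- key : Abaffian kills previous rows
  have key : ∀ l, 1 ≤ l → ∀ j, l < j → j ≤ m + 1 → (H j).mulVec (a l) = 0 := by
    intro l hl j hj hjm
    induction j with
    | zero => omega
    | succ j ih =>
      rcases lt_or_eq_of_le (Nat.lt_succ_iff.mp hj) with hlt | heq
      · have hjm' : j ≤ m := by omega
        have hj1 : 1 ≤ j := by omega
        have h0 : (H j).mulVec (a l) = 0 := ih hlt (by omega)
        rw [hrec j hj1 hjm', Matrix.sub_mulVec, Matrix.smul_mulVec,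
          my_vecMulVec_mulVec, h0]
        have : Matrix.vecMul (w j) (H j) ⬝ᵥ a l = 0 := by
          rw [← Matrix.dotProduct_mulVec, h0, dotProduct_zero]
        rw [this]
        simp
      · subst heq
        have hlm : l ≤ m := by omega
        rw [hrec l hl hlm, Matrix.sub_mulVec, Matrix.smul_mulVec,
          my_vecMulVec_mulVec, ← Matrix.dotProduct_mulVec, smul_smul,
          inv_mul_cancel₀ (hw l hl hlm), one_smul, sub_self]
  -- a l ⬝ p i = 0 for l < i
  have hap0 : ∀ i l, 1 ≤ l → l < i → i ≤ m → a l ⬝ᵥ p i = 0 := by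
    intro i l hl hli him
    rw [hp i (by omega) him, Matrix.mulVec_transpose, dotProduct_comm,
      ← Matrix.dotProduct_mulVec, key l hl i hli (by omega), dotProduct_zero]
  -- a i ⬝ p i ≠ 0
  have hapne : ∀ i, 1 ≤ i → i ≤ m → a i ⬝ᵥ p i ≠ 0 := by
    intro i hi him
    rw [hp i hi him, Matrix.mulVec_transpose, dotProduct_comm,
      ← Matrix.dotProduct_mulVec]
    exact hz i hi him
  have main : ∀ i l, 1 ≤ l → l ≤ i → i ≤ m → a l ⬝ᵥ x (i + 1) = b l := by
    intro i
    induction i with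
    | zero => intro l hl hli; omega
    | succ i ih =>
      intro l hl hli him
      have hi1 : 1 ≤ i + 1 := by omega
      rw [hx (i + 1) hi1 him, dotProduct_sub, dotProduct_smul, smul_eq_mul]
      rcases lt_or_eq_of_le hli with hlt | heq
      · rw [hap0 (i + 1) l hl hlt him, mul_zero, sub_zero]
        exact ih l hl (by omega) (by omega)
      · subst heq
        rw [div_mul_cancel₀ _ (hapne (i + 1) hi1 him)]
        ring
  exact ⟨main, fun l hl hlm => main m l hl hlm le_rfl⟩
end
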